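/- arXiv:2506.09509 — 2 statements merged into one kernel-verified Lean document; each statement's English description precedes it below -/
import Mathlib

section
/- For all positive integers n and b ≥ 2, the flattening of ((b+1)·n) ⊖_b n equals n ⊕_{-b} (-n). Here ⊖_b is digitwise subtraction mod b in base b, ⊕_{-b} is digitwise addition mod b of base-(-b) digits read as a base-b number, and flattening replaces each nonzero base-b digit by 1. -/
/-- The `i`-th digit of the base-`b` expansion of `n`. -/
def bDigit (b n i : ℕ) : ℕ := (Nat.digits b n).getD i 0

/-- One step of the base-`(-b)` digit extraction: remove the least digit and divide by `-b`. -/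
def negaStep (b m : ℤ) : ℤ := (m - m % b) / (-b)

/-- The `i`-th digit of the base-`(-b)` expansion of the integer `m`
(digits lie in `{0,...,b-1}` when `b ≥ 2`). -/
def negaDigit (b m : ℤ) (i : ℕ) : ℤ := ((negaStep b)^[i] m) % b

/-- Digitwise addition mod `b` of base-`(-b)` expansions, read off in powers of `+b`. -/
noncomputable def oplusNeg (b α β : ℤ) : ℤ :=
  ∑ᶠ i : ℕ, ((negaDigit b α i + negaDigit b β i) % b) * b ^ i

/-- Digitwise addition mod `b` of base-`b` expansions. -/
noncomputable def oplus (b α β : ℕ) : ℕ :=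
  ∑ᶠ i : ℕ, ((bDigit b α i + bDigit b β i) % b) * b ^ i

/-- Digitwise subtraction mod `b` of base-`b` expansions. -/
noncomputable def ominus (b α β : ℕ) : ℕ :=
  ∑ᶠ i : ℕ, ((((bDigit b α i : ℤ) - (bDigit b β i : ℤ)) % (b : ℤ)).toNat) * b ^ i

/-- Flattening: replace each nonzero base-`b` digit by `1`. -/
noncomputable def flat (b n : ℕ) : ℕ :=
  ∑ᶠ i : ℕ, min (bDigit b n i) 1 * b ^ i

/-- The carry sequence for multiplying `n` by `b+1` in base `b`. -/
def carrySeq (b n : ℕ) : ℕ → ℕ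
  | 0 => 0
  | k + 1 => (bDigit b n k + carrySeq b n k) / b + bDigit b n k

lemma bDigit_eq_div_mod {b : ℕ} (hb : 1 < b) (n i : ℕ) :
    bDigit b n i = n / b ^ i % b := by
  induction i generalizing n with
  | zero =>
    rcases Nat.eq_zero_or_pos n with h | h
    · simp [bDigit, h]
    · rw [bDigit, Nat.digits_def' hb h]; simp
  | succ i ih =>
    rcases Nat.eq_zero_or_pos n with h | h
    · simp [bDigit, h]
    · rw [bDigit, Nat.digits_def' hb h]
      show (Nat.digits b (n / b)).getD i 0 = _
      rw [← bDigit, ih]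
      rw [Nat.div_div_eq_div_mul, pow_succ']

lemma bDigit_lt {b : ℕ} (hb : 1 < b) (n i : ℕ) : bDigit b n i < b := by
  rw [bDigit_eq_div_mod hb]; exact Nat.mod_lt _ (by omega)

lemma sum_digits_lt {b : ℕ} (hb : 1 < b) (d : ℕ → ℕ) (hd : ∀ i, d i < b) (M : ℕ) :
    (∑ i ∈ Finset.range M, d i * b ^ i) < b ^ M := by
  induction M with
  | zero => simp
  | succ M ih =>
    rw [Finset.sum_range_succ, pow_succ]
    have h1 : d M * b ^ M ≤ (b - 1) * b ^ M :=
      Nat.mul_le_mul_right _ (by have := hd M; omega)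
    have h2 : b ^ M * b = (b - 1) * b ^ M + b ^ M := by
      have hb1 : b = (b - 1) + 1 := by omega
      calc b ^ M * b = b ^ M * ((b - 1) + 1) := by rw [← hb1]
        _ = (b - 1) * b ^ M + b ^ M := by ring
    omega

lemma bDigit_of_sum {b : ℕ} (hb : 1 < b) (d : ℕ → ℕ) (hd : ∀ i, d i < b)
    (N : ℕ) (hN : ∀ i, N ≤ i → d i = 0) (j : ℕ) :
    bDigit b (∑ i ∈ Finset.range N, d i * b ^ i) j = d j := by
  rw [bDigit_eq_div_mod hb]
  rcases le_or_gt N j with h | h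
  · rw [Nat.div_eq_of_lt (lt_of_lt_of_le (sum_digits_lt hb d hd N) (Nat.pow_le_pow_right (by omega) h))]
    simp [hN j h]
  · -- split the sum
    have hsplit : ∑ i ∈ Finset.range N, d i * b ^ i
        = (∑ i ∈ Finset.range j, d i * b ^ i)
          + b ^ j * ∑ k ∈ Finset.range (N - j), d (j + k) * b ^ k := by
      rw [← Finset.sum_range_add_sum_Ico _ (le_of_lt h), Finset.sum_Ico_eq_sum_range,
        Finset.mul_sum]
      congr 1
      refine Finset.sum_congr rfl fun k _ => ?_
      rw [pow_add]; ring
    rw [hsplit]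
    have hlow : (∑ i ∈ Finset.range j, d i * b ^ i) < b ^ j := sum_digits_lt hb d hd j
    rw [Nat.add_mul_div_left _ _ (Nat.pow_pos (by omega : 0 < b)),
      Nat.div_eq_of_lt hlow, Nat.zero_add]
    -- peel the first term
    obtain ⟨m, hm⟩ : ∃ m, N - j = m + 1 := ⟨N - j - 1, by omega⟩
    rw [hm, Finset.sum_range_succ']
    simp only [pow_zero, mul_one, add_zero]
    have : (∑ k ∈ Finset.range m, d (j + (k + 1)) * b ^ (k + 1))
        = b * ∑ k ∈ Finset.range m, d (j + (k + 1)) * b ^ k := by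
      rw [Finset.mul_sum]
      refine Finset.sum_congr rfl fun k _ => ?_
      rw [pow_succ]; ring
    rw [this, Nat.mul_add_mod, Nat.mod_eq_of_lt (hd j)]


lemma carrySeq_le {b : ℕ} (hb : 1 < b) (n : ℕ) : ∀ i, carrySeq b n i ≤ b := by
  intro i
  induction i with
  | zero => simp [carrySeq]
  | succ i ih =>
    rw [carrySeq]
    have ha := bDigit_lt hb n i
    have : (bDigit b n i + carrySeq b n i) / b ≤ 1 := by
      rw [Nat.div_le_iff_le_mul_add_pred (by omega)]
      omega
    omega

lemma carrySeq_succ_eq {b : ℕ} (n k : ℕ) :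
    carrySeq b n (k + 1) = (bDigit b n k + carrySeq b n k) / b + bDigit b n k := rfl

lemma telescope {b : ℕ} (hb : 1 < b) (n : ℕ) : ∀ N : ℕ,
    (b + 1) * n = (∑ i ∈ Finset.range N, (bDigit b n i + carrySeq b n i) % b * b ^ i)
      + carrySeq b n N * b ^ N + (b + 1) * (n / b ^ N) * b ^ N := by
  intro N
  induction N with
  | zero => simp [carrySeq]
  | succ N ih =>
    rw [ih, Finset.sum_range_succ]
    have hdm := Nat.div_add_mod (bDigit b n N + carrySeq b n N) b
    have hf : n / b ^ N = b * (n / b ^ (N + 1)) + bDigit b n N := by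
      rw [bDigit_eq_div_mod hb, pow_succ, ← Nat.div_div_eq_div_mul]
      exact (Nat.div_add_mod _ b).symm
    rw [carrySeq_succ_eq, hf]
    set A := bDigit b n N
    set C := carrySeq b n N
    set q := (A + C) / b
    set r := (A + C) % b
    set f' := n / b ^ (N + 1)
    zify
    zify at hdm
    linear_combination (-(b : ℤ) ^ N) * hdm


lemma negaStep_eq {b : ℕ} (hb : 0 < b) (m : ℤ) : negaStep (b : ℤ) m = -(m / (b : ℤ)) := by
  have h1 : m - m % (b : ℤ) = (b : ℤ) * (m / (b : ℤ)) := by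
    have := Int.mul_ediv_add_emod m (b : ℤ)
    omega
  have hbz : -(b : ℤ) ≠ 0 := by
    simp only [neg_ne_zero, Ne, Int.natCast_eq_zero]; omega
  rw [negaStep, h1]
  rw [show (b : ℤ) * (m / (b : ℤ)) = -(b : ℤ) * (-(m / (b : ℤ))) by ring]
  exact Int.mul_ediv_cancel_left _ hbz

lemma int_div_pos {b : ℕ} (hb : 0 < b) (f f2 ρ : ℕ) (h : f = b * f2 + ρ) (hρ : ρ < b) :
    (f : ℤ) / (b : ℤ) = (f2 : ℤ) := by
  have : (f : ℕ) / b = f2 := by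
    rw [h, Nat.mul_add_div hb, Nat.div_eq_of_lt hρ]; omega
  calc (f : ℤ) / (b : ℤ) = ((f / b : ℕ) : ℤ) := by exact_mod_cast rfl
    _ = (f2 : ℤ) := by rw [this]

lemma int_div_neg0 {b : ℕ} (hb : 0 < b) (f f2 : ℕ) (h : f = b * f2) :
    (-(f : ℤ)) / (b : ℤ) = -(f2 : ℤ) := by
  have hbz : (b : ℤ) ≠ 0 := by exact_mod_cast hb.ne'
  rw [h]
  push_cast
  rw [show -((b : ℤ) * (f2 : ℤ)) = (b : ℤ) * (-(f2 : ℤ)) by ring]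
  exact Int.mul_ediv_cancel_left _ hbz

lemma int_div_neg {b : ℕ} (hb : 0 < b) (f f2 ρ : ℕ) (h : f = b * f2 + ρ)
    (hρ1 : 0 < ρ) (hρ2 : ρ ≤ b) :
    (-(f : ℤ)) / (b : ℤ) = -(f2 : ℤ) - 1 := by
  have hbz : (b : ℤ) ≠ 0 := by exact_mod_cast hb.ne'
  have h2 : (-(f : ℤ)) = ((b - ρ : ℕ) : ℤ) + (-(f2 : ℤ) - 1) * (b : ℤ) := by
    push_cast [Nat.cast_sub hρ2]
    rw [h]; push_cast; ring
  rw [h2, Int.add_mul_ediv_right _ _ hbz,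
    Int.ediv_eq_zero_of_lt (by positivity) (by exact_mod_cast (by omega : b - ρ < b))]
  ring

lemma div1 {b x : ℕ} (h1 : b ≤ x) (h2 : x < 2 * b) : x / b = 1 := by
  rw [Nat.div_eq_sub_div (by omega) h1, Nat.div_eq_of_lt (by omega)]


lemma key {b : ℕ} (hb : 2 ≤ b) (n : ℕ) : ∀ i : ℕ,
    (carrySeq b n i = 0 ∧ (negaStep b)^[i] (n : ℤ) = (-1) ^ i * ((n / b ^ i : ℕ) : ℤ)
        ∧ (negaStep b)^[i] (-(n : ℤ)) = -((negaStep b)^[i] (n : ℤ))) ∨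
    (carrySeq b n i = b ∧ (negaStep b)^[i] (n : ℤ) = (-1) ^ i * (((n / b ^ i : ℕ) : ℤ) + 1)
        ∧ (negaStep b)^[i] (-(n : ℤ)) = -((negaStep b)^[i] (n : ℤ))) ∨
    (1 ≤ carrySeq b n i ∧ carrySeq b n i < b
        ∧ (negaStep b)^[i] (n : ℤ)
            = (-1) ^ i * ((n / b ^ i : ℕ) : ℤ) + (if Even i then 1 else 0)
        ∧ (negaStep b)^[i] (-(n : ℤ)) = 1 - (negaStep b)^[i] (n : ℤ)) := by
  intro i
  induction i with
  | zero => exact Or.inl ⟨rfl, by simp, by simp⟩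
  | succ i ih =>
    have hbz : (0 : ℕ) < b := by omega
    have ha : bDigit b n i < b := bDigit_lt (by omega) n i
    set a := bDigit b n i with ha_def
    set f := n / b ^ i with hf_def
    set f2 := n / b ^ (i + 1) with hf2_def
    have hfa : f = b * f2 + a := by
      rw [ha_def, bDigit_eq_div_mod (by omega), hf_def, hf2_def, pow_succ,
        ← Nat.div_div_eq_div_mul]
      exact (Nat.div_add_mod _ b).symm
    have hR : ∀ m : ℤ, (negaStep b)^[i + 1] m = -((negaStep b)^[i] m / (b : ℤ)) := by
      intro m
      rw [Function.iterate_succ_apply', negaStep_eq hbz]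
    have hc' : carrySeq b n (i + 1) = (a + carrySeq b n i) / b + a := rfl
    rcases Nat.even_or_odd i with hev | hod
    · -- even i
      have hp1 : ((-1 : ℤ)) ^ i = 1 := hev.neg_one_pow
      have hp2 : ((-1 : ℤ)) ^ (i + 1) = -1 := hev.add_one.neg_one_pow
      have hp4 : (if Even (i + 1) then (1 : ℤ) else 0) = 0 := by
        simp [Nat.even_add_one, hev]
      rcases ih with ⟨hc, hRv, hSv⟩ | ⟨hc, hRv, hSv⟩ | ⟨hc1, hc2, hRv, hSv⟩
      · -- state A, even
        rw [hp1, one_mul] at hRv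
        rcases Nat.eq_zero_or_pos a with ha0 | ha1
        · have hRnew : (negaStep (b : ℤ))^[i + 1] (n : ℤ) = -(f2 : ℤ) := by
            rw [hR, hRv, int_div_pos hbz f f2 a hfa ha]
          have hSnew : (negaStep (b : ℤ))^[i + 1] (-(n : ℤ)) = (f2 : ℤ) := by
            rw [hR, hSv, hRv, int_div_neg0 hbz f f2 (by omega)] <;> ring
          refine Or.inl ⟨?_, ?_, ?_⟩
          · simp [hc', hc, ha0]
          · rw [hRnew, hp2] <;> ring
          · rw [hSnew, hRnew] <;> ring
        · have hRnew : (negaStep (b : ℤ))^[i + 1] (n : ℤ) = -(f2 : ℤ) := by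
            rw [hR, hRv, int_div_pos hbz f f2 a hfa ha]
          have hSnew : (negaStep (b : ℤ))^[i + 1] (-(n : ℤ)) = (f2 : ℤ) + 1 := by
            rw [hR, hSv, hRv, int_div_neg hbz f f2 a hfa ha1 (by omega)] <;> ring
          have hcv : carrySeq b n (i + 1) = a := by
            rw [hc', hc]
            have : (a + 0) / b = 0 := Nat.div_eq_of_lt (by omega)
            omega
          refine Or.inr (Or.inr ⟨by omega, by omega, ?_, ?_⟩)
          · rw [hRnew, hp2, hp4] <;> ring
          · rw [hSnew, hRnew] <;> ring
      · -- state B, even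
        rw [hp1, one_mul] at hRv
        have hnum : ((f : ℤ) + 1) = ((f + 1 : ℕ) : ℤ) := by push_cast; ring
        have hSnew : (negaStep (b : ℤ))^[i + 1] (-(n : ℤ)) = (f2 : ℤ) + 1 := by
          rw [hR, hSv, hRv, hnum, int_div_neg hbz (f + 1) f2 (a + 1) (by omega) (by omega) (by omega)]
          ring
        have hcv : carrySeq b n (i + 1) = a + 1 := by
          rw [hc', hc]
          have : (a + b) / b = 1 := div1 (by omega) (by omega)
          omega
        rcases eq_or_ne a (b - 1) with ha1 | ha1
        · have hRnew : (negaStep (b : ℤ))^[i + 1] (n : ℤ) = -((f2 : ℤ) + 1) := by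
            rw [hR, hRv, hnum, int_div_pos hbz (f + 1) (f2 + 1) 0 (by rw [show b * (f2 + 1) + 0 = b * f2 + b by ring]; omega) (by omega)]
            push_cast; ring
          refine Or.inr (Or.inl ⟨by omega, ?_, ?_⟩)
          · rw [hRnew, hp2] <;> ring
          · rw [hSnew, hRnew] <;> ring
        · have hRnew : (negaStep (b : ℤ))^[i + 1] (n : ℤ) = -(f2 : ℤ) := by
            rw [hR, hRv, hnum, int_div_pos hbz (f + 1) f2 (a + 1) (by omega) (by omega)]
          refine Or.inr (Or.inr ⟨by omega, by omega, ?_, ?_⟩)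
          · rw [hRnew, hp2, hp4] <;> ring
          · rw [hSnew, hRnew] <;> ring
      · -- state C, even
        rw [hp1, one_mul] at hRv
        rw [if_pos hev] at hRv
        have hnum : ((f : ℤ) + 1) = ((f + 1 : ℕ) : ℤ) := by push_cast; ring
        rcases Nat.eq_zero_or_pos a with ha0 | hapos
        · have hRnew : (negaStep (b : ℤ))^[i + 1] (n : ℤ) = -(f2 : ℤ) := by
            rw [hR, hRv, hnum, int_div_pos hbz (f + 1) f2 (a + 1) (by omega) (by omega)]
          have hSnew : (negaStep (b : ℤ))^[i + 1] (-(n : ℤ)) = (f2 : ℤ) := by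
            rw [hR, hSv, hRv, show (1 : ℤ) - ((f : ℤ) + 1) = -(f : ℤ) by ring,
              int_div_neg0 hbz f f2 (by omega)]
            ring
          refine Or.inl ⟨?_, ?_, ?_⟩
          · rw [hc', ha0]
            have : (0 + carrySeq b n i) / b = 0 := Nat.div_eq_of_lt (by omega)
            omega
          · rw [hRnew, hp2] <;> ring
          · rw [hSnew, hRnew] <;> ring
        · have hSnew : (negaStep (b : ℤ))^[i + 1] (-(n : ℤ)) = (f2 : ℤ) + 1 := by
            rw [hR, hSv, hRv, show (1 : ℤ) - ((f : ℤ) + 1) = -(f : ℤ) by ring,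
              int_div_neg hbz f f2 a hfa hapos (by omega)]
            ring
          rcases eq_or_ne a (b - 1) with ha1 | ha1
          · have hRnew : (negaStep (b : ℤ))^[i + 1] (n : ℤ) = -((f2 : ℤ) + 1) := by
              rw [hR, hRv, hnum, int_div_pos hbz (f + 1) (f2 + 1) 0 (by rw [show b * (f2 + 1) + 0 = b * f2 + b by ring]; omega) (by omega)]
              push_cast; ring
            have hcv : carrySeq b n (i + 1) = b := by
              rw [hc']
              have : (a + carrySeq b n i) / b = 1 := div1 (by omega) (by omega)
              omega
            refine Or.inr (Or.inl ⟨by omega, ?_, ?_⟩)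
            · rw [hRnew, hp2] <;> ring
            · rw [hSnew, hRnew] <;> ring
          · have hRnew : (negaStep (b : ℤ))^[i + 1] (n : ℤ) = -(f2 : ℤ) := by
              rw [hR, hRv, hnum, int_div_pos hbz (f + 1) f2 (a + 1) (by omega) (by omega)]
            have hcb : (a + carrySeq b n i) / b ≤ 1 := by
              have := Nat.div_lt_of_lt_mul (show a + carrySeq b n i < b * 2 by omega)
              omega
            obtain ⟨q, hq⟩ : ∃ q, (a + carrySeq b n i) / b = q := ⟨_, rfl⟩
            rw [hq] at hcb
            refine Or.inr (Or.inr ⟨by rw [hc', hq]; omega, by rw [hc', hq]; omega, ?_, ?_⟩)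
            · rw [hRnew, hp2, hp4] <;> ring
            · rw [hSnew, hRnew] <;> ring
    · -- odd i
      have hp1 : ((-1 : ℤ)) ^ i = -1 := hod.neg_one_pow
      have hev' : Even (i + 1) := hod.add_one
      have hp2 : ((-1 : ℤ)) ^ (i + 1) = 1 := hev'.neg_one_pow
      have hp4 : (if Even (i + 1) then (1 : ℤ) else 0) = 1 := if_pos hev'
      rcases ih with ⟨hc, hRv, hSv⟩ | ⟨hc, hRv, hSv⟩ | ⟨hc1, hc2, hRv, hSv⟩
      · -- state A, odd
        rw [hp1, neg_one_mul] at hRv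
        rcases Nat.eq_zero_or_pos a with ha0 | ha1
        · have hRnew : (negaStep (b : ℤ))^[i + 1] (n : ℤ) = (f2 : ℤ) := by
            rw [hR, hRv, int_div_neg0 hbz f f2 (by omega)] <;> ring
          have hSnew : (negaStep (b : ℤ))^[i + 1] (-(n : ℤ)) = -(f2 : ℤ) := by
            rw [hR, hSv, hRv, neg_neg, int_div_pos hbz f f2 a hfa ha]
          refine Or.inl ⟨?_, ?_, ?_⟩
          · simp [hc', hc, ha0]
          · rw [hRnew, hp2] <;> ring
          · rw [hSnew, hRnew] <;> ring
        · have hRnew : (negaStep (b : ℤ))^[i + 1] (n : ℤ) = (f2 : ℤ) + 1 := by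
            rw [hR, hRv, int_div_neg hbz f f2 a hfa ha1 (by omega)] <;> ring
          have hSnew : (negaStep (b : ℤ))^[i + 1] (-(n : ℤ)) = -(f2 : ℤ) := by
            rw [hR, hSv, hRv, neg_neg, int_div_pos hbz f f2 a hfa ha]
          have hcv : carrySeq b n (i + 1) = a := by
            rw [hc', hc]
            have : (a + 0) / b = 0 := Nat.div_eq_of_lt (by omega)
            omega
          refine Or.inr (Or.inr ⟨by omega, by omega, ?_, ?_⟩)
          · rw [hRnew, hp2, hp4] <;> ring
          · rw [hSnew, hRnew] <;> ring
      · -- state B, odd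
        rw [hp1] at hRv
        rw [show (-1 : ℤ) * ((f : ℤ) + 1) = -((f + 1 : ℕ) : ℤ) by push_cast; ring] at hRv
        have hRnew : (negaStep (b : ℤ))^[i + 1] (n : ℤ) = (f2 : ℤ) + 1 := by
          rw [hR, hRv, int_div_neg hbz (f + 1) f2 (a + 1) (by omega) (by omega) (by omega)]
          ring
        have hcv : carrySeq b n (i + 1) = a + 1 := by
          rw [hc', hc]
          have : (a + b) / b = 1 := div1 (by omega) (by omega)
          omega
        rcases eq_or_ne a (b - 1) with ha1 | ha1
        · have hSnew : (negaStep (b : ℤ))^[i + 1] (-(n : ℤ)) = -((f2 : ℤ) + 1) := by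
            rw [hR, hSv, hRv, neg_neg, int_div_pos hbz (f + 1) (f2 + 1) 0 (by rw [show b * (f2 + 1) + 0 = b * f2 + b by ring]; omega) (by omega)]
            push_cast; ring
          refine Or.inr (Or.inl ⟨by omega, ?_, ?_⟩)
          · rw [hRnew, hp2] <;> ring
          · rw [hSnew, hRnew] <;> ring
        · have hSnew : (negaStep (b : ℤ))^[i + 1] (-(n : ℤ)) = -(f2 : ℤ) := by
            rw [hR, hSv, hRv, neg_neg, int_div_pos hbz (f + 1) f2 (a + 1) (by omega) (by omega)]
          refine Or.inr (Or.inr ⟨by omega, by omega, ?_, ?_⟩)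
          · rw [hRnew, hp2, hp4] <;> ring
          · rw [hSnew, hRnew] <;> ring
      · -- state C, odd
        rw [hp1, neg_one_mul, if_neg (by simp [Nat.not_even_iff_odd.mpr hod])] at hRv
        rw [add_zero] at hRv
        have hSval : (negaStep (b : ℤ))^[i] (-(n : ℤ)) = ((f + 1 : ℕ) : ℤ) := by
          rw [hSv, hRv]; push_cast; ring
        have hSnew : (negaStep (b : ℤ))^[i + 1] (-(n : ℤ)) = -(((f + 1) / b : ℕ) : ℤ) := by
          rw [hR, hSval, int_div_pos hbz (f + 1) ((f + 1) / b) ((f + 1) % b)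
            (Nat.div_add_mod (f + 1) b).symm (Nat.mod_lt _ hbz)]
        rcases Nat.eq_zero_or_pos a with ha0 | hapos
        · have hRnew : (negaStep (b : ℤ))^[i + 1] (n : ℤ) = (f2 : ℤ) := by
            rw [hR, hRv, int_div_neg0 hbz f f2 (by omega)] <;> ring
          have hSnew' : (negaStep (b : ℤ))^[i + 1] (-(n : ℤ)) = -(f2 : ℤ) := by
            rw [hSnew]
            have : (f + 1) / b = f2 := by
              rw [hfa, ha0, show b * f2 + 0 + 1 = b * f2 + 1 by omega,
                Nat.mul_add_div hbz, Nat.div_eq_of_lt (by omega)]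
              omega
            rw [this]
          refine Or.inl ⟨?_, ?_, ?_⟩
          · rw [hc', ha0]
            have : (0 + carrySeq b n i) / b = 0 := Nat.div_eq_of_lt (by omega)
            omega
          · rw [hRnew, hp2] <;> ring
          · rw [hSnew', hRnew] <;> ring
        · have hRnew : (negaStep (b : ℤ))^[i + 1] (n : ℤ) = (f2 : ℤ) + 1 := by
            rw [hR, hRv, int_div_neg hbz f f2 a hfa hapos (by omega)] <;> ring
          rcases eq_or_ne a (b - 1) with ha1 | ha1
          · have hSnew' : (negaStep (b : ℤ))^[i + 1] (-(n : ℤ)) = -((f2 : ℤ) + 1) := by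
              rw [hSnew]
              have : (f + 1) / b = f2 + 1 := by
                rw [hfa]
                rw [show b * f2 + a + 1 = b * (f2 + 1) by rw [show b * (f2 + 1) = b * f2 + b by ring]; omega]
                exact Nat.mul_div_cancel_left _ hbz
              rw [this]; push_cast; ring
            have hcv : carrySeq b n (i + 1) = b := by
              rw [hc']
              have : (a + carrySeq b n i) / b = 1 := div1 (by omega) (by omega)
              omega
            refine Or.inr (Or.inl ⟨by omega, ?_, ?_⟩)
            · rw [hRnew, hp2] <;> ring
            · rw [hSnew', hRnew] <;> ring
          · have hSnew' : (negaStep (b : ℤ))^[i + 1] (-(n : ℤ)) = -(f2 : ℤ) := by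
              rw [hSnew]
              have : (f + 1) / b = f2 := by
                rw [hfa, show b * f2 + a + 1 = b * f2 + (a + 1) by omega,
                  Nat.mul_add_div hbz, Nat.div_eq_of_lt (by omega)]
                omega
              rw [this]
            have hcb : (a + carrySeq b n i) / b ≤ 1 := by
              have := Nat.div_lt_of_lt_mul (show a + carrySeq b n i < b * 2 by omega)
              omega
            obtain ⟨q, hq⟩ : ∃ q, (a + carrySeq b n i) / b = q := ⟨_, rfl⟩
            rw [hq] at hcb
            refine Or.inr (Or.inr ⟨by rw [hc', hq]; omega, by rw [hc', hq]; omega, ?_, ?_⟩)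
            · rw [hRnew, hp2, hp4] <;> ring
            · rw [hSnew', hRnew] <;> ring


theorem stmt3 (b n : ℕ) (hb : 2 ≤ b) (hn : 0 < n) :
    (flat b (ominus b ((b + 1) * n) n) : ℤ) = oplusNeg (b : ℤ) (n : ℤ) (-(n : ℤ)) := by
  have hb1 : 1 < b := hb
  -- eventual vanishing
  obtain ⟨K, hK⟩ : ∃ K, ∀ i, K ≤ i → n / b ^ i = 0 := by
    refine ⟨n, fun i hi => Nat.div_eq_of_lt ?_⟩
    calc n < b ^ n := Nat.lt_pow_self hb1
      _ ≤ b ^ i := Nat.pow_le_pow_right (by omega) hi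
  have hdig0 : ∀ i, K ≤ i → bDigit b n i = 0 := by
    intro i hi; rw [bDigit_eq_div_mod hb1, hK i hi]; simp
  set N := K + 2 with hN_def
  have hczero : ∀ i, N ≤ i → carrySeq b n i = 0 := by
    have hc1 : carrySeq b n (K + 1) ≤ 1 := by
      have h := carrySeq_le hb1 n K
      have : carrySeq b n (K + 1) = (bDigit b n K + carrySeq b n K) / b + bDigit b n K := rfl
      rw [this, hdig0 K le_rfl]
      have : (0 + carrySeq b n K) / b ≤ b / b := Nat.div_le_div_right (by omega)
      rw [Nat.div_self (by omega)] at this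
      omega
    have hc2 : carrySeq b n (K + 2) = 0 := by
      have : carrySeq b n (K + 2)
          = (bDigit b n (K + 1) + carrySeq b n (K + 1)) / b + bDigit b n (K + 1) := rfl
      rw [this, hdig0 (K + 1) (by omega)]
      rw [Nat.div_eq_of_lt (by omega)]
    intro i hi
    obtain ⟨j, rfl⟩ : ∃ j, i = K + 2 + j := ⟨i - (K + 2), by omega⟩
    clear hi
    induction j with
    | zero => exact hc2
    | succ j ih =>
      have : carrySeq b n (K + 2 + (j + 1))
          = (bDigit b n (K + 2 + j) + carrySeq b n (K + 2 + j)) / b + bDigit b n (K + 2 + j) := rfl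
      rw [this, ih, hdig0 _ (by omega), Nat.div_eq_of_lt (by omega)]
  have hdigN : ∀ i, N ≤ i → bDigit b n i = 0 := fun i hi => hdig0 i (by omega)
  -- digits of (b+1)*n
  set d : ℕ → ℕ := fun i => (bDigit b n i + carrySeq b n i) % b with hd_def
  have hdlt : ∀ i, d i < b := fun i => Nat.mod_lt _ (by omega)
  have hdzero : ∀ i, N ≤ i → d i = 0 := by
    intro i hi; simp [hd_def, hdigN i hi, hczero i hi]
  have hsum : (b + 1) * n = ∑ i ∈ Finset.range N, d i * b ^ i := by
    have := telescope hb1 n N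
    rw [hczero N le_rfl, hK N (by omega)] at this
    simpa using this
  have hbd : ∀ j, bDigit b ((b + 1) * n) j = d j := by
    intro j; rw [hsum]; exact bDigit_of_sum hb1 d hdlt N hdzero j
  -- ominus computation
  have hptwise : ∀ i, ((((bDigit b ((b + 1) * n) i : ℤ) - (bDigit b n i : ℤ)) % (b : ℤ)).toNat)
      = carrySeq b n i % b := by
    intro i
    rw [hbd i]
    set A := bDigit b n i
    set C := carrySeq b n i
    have h1 : ((d i : ℤ) - (A : ℤ)) % (b : ℤ) = ((C % b : ℕ) : ℤ) := by
      have hd' : (d i : ℤ) = ((A : ℤ) + (C : ℤ)) % (b : ℤ) := by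
        simp only [hd_def]; push_cast; ring
      rw [hd']
      have e1 : (((A : ℤ) + C) % b - A) % b = (((A : ℤ) + C) - A) % b := by
        conv_rhs => rw [Int.sub_emod]
        rw [Int.sub_emod, Int.emod_emod_of_dvd _ dvd_rfl]
      rw [e1]
      push_cast
      congr 1
      ring
    rw [h1]
    norm_cast
  have hom : ominus b ((b + 1) * n) n = ∑ i ∈ Finset.range N, (carrySeq b n i % b) * b ^ i := by
    rw [ominus]
    rw [finsum_congr fun i => by rw [hptwise i]]
    exact finsum_eq_sum_of_support_subset _ (by
      intro i hi
      simp only [Function.mem_support, ne_eq] at hi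
      simp only [Finset.coe_range, Set.mem_Iio]
      by_contra h
      exact hi (by rw [hczero i (by omega)]; simp))
  have hbdo : ∀ j, bDigit b (ominus b ((b + 1) * n) n) j = carrySeq b n j % b := by
    intro j; rw [hom]
    exact bDigit_of_sum hb1 _ (fun i => Nat.mod_lt _ (by omega)) N
      (fun i hi => by rw [hczero i hi]; simp) j
  have hflat : flat b (ominus b ((b + 1) * n) n)
      = ∑ i ∈ Finset.range N, min (carrySeq b n i % b) 1 * b ^ i := by
    rw [flat]
    rw [finsum_congr fun i => by rw [hbdo i]]
    exact finsum_eq_sum_of_support_subset _ (by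
      intro i hi
      simp only [Function.mem_support, ne_eq] at hi
      simp only [Finset.coe_range, Set.mem_Iio]
      by_contra h
      exact hi (by rw [hczero i (by omega)]; simp))
  -- RHS pointwise
  have hrhs : ∀ i : ℕ, ((negaDigit (b : ℤ) (n : ℤ) i + negaDigit (b : ℤ) (-(n : ℤ)) i) % (b : ℤ))
      = ((min (carrySeq b n i % b) 1 : ℕ) : ℤ) := by
    intro i
    rcases key hb n i with ⟨hc, hRv, hSv⟩ | ⟨hc, hRv, hSv⟩ | ⟨hc1, hc2, hRv, hSv⟩
    · rw [negaDigit, negaDigit, hSv, ← Int.add_emod]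
      simp [hc]
    · rw [negaDigit, negaDigit, hSv, ← Int.add_emod]
      simp [hc, Nat.mod_self]
    · rw [negaDigit, negaDigit, hSv, ← Int.add_emod]
      rw [show (negaStep (b:ℤ))^[i] (n:ℤ) + (1 - (negaStep (b:ℤ))^[i] (n:ℤ)) = 1 by ring]
      rw [Int.emod_eq_of_lt (by omega) (by exact_mod_cast hb1)]
      rw [Nat.mod_eq_of_lt hc2]
      have : min (carrySeq b n i) 1 = 1 := by omega
      rw [this]
      simp
  have hoplus : oplusNeg (b : ℤ) (n : ℤ) (-(n : ℤ))
      = ∑ i ∈ Finset.range N, ((min (carrySeq b n i % b) 1 : ℕ) : ℤ) * (b : ℤ) ^ i := by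
    rw [oplusNeg]
    rw [finsum_congr fun i => by rw [hrhs i]]
    exact finsum_eq_sum_of_support_subset _ (by
      intro i hi
      simp only [Function.mem_support, ne_eq] at hi
      simp only [Finset.coe_range, Set.mem_Iio]
      by_contra h
      exact hi (by rw [hczero i (by omega)]; simp))
  rw [hflat, hoplus]
  push_cast
  rfl
end

section
/- For b ≥ 2, the i-th base-(-b) digit of -n can be obtained from the base-b digits of n by a finite-state transduction with carry states in {0,1}: there exist carries c_i ∈ {0,1} with c_0 determined by whether the 0-th position is treated as even, such that -n = Σ e_i (-b)^i where each e_i ∈ {0,...,b-1} depends only on (a_i, c_i, parity of i). -/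
lemma bDigit_eq (b : ℕ) (hb : 2 ≤ b) : ∀ (i n : ℕ), bDigit b n i = n / b ^ i % b := by
  intro i
  induction i with
  | zero =>
    intro n
    rcases Nat.eq_zero_or_pos n with h | h
    · simp [bDigit, h]
    · rw [bDigit, Nat.digits_def' (by omega : 1 < b) h]
      simp
  | succ i ih =>
    intro n
    rcases Nat.eq_zero_or_pos n with h | h
    · simp [bDigit, h]
    · rw [bDigit, Nat.digits_def' (by omega : 1 < b) h]
      show (Nat.digits b (n / b)).getD i 0 = _
      rw [← bDigit, ih, Nat.div_div_eq_div_mul, pow_succ']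

/-- Output digit function. -/
def myF (b a c : ℕ) (p : Bool) : ℤ :=
  if p then (if a + c = 0 then 0 else (b : ℤ) - a - c)
  else (if a + c = b then 0 else (a : ℤ) + c)

/-- Carry transition function. -/
def myG (b a c : ℕ) (p : Bool) : ℕ :=
  if p then (if a + c = 0 then 0 else 1)
  else (if a + c = b then 1 else 0)

/-- The carry sequence. -/
def myC (b n : ℕ) : ℕ → ℕ
  | 0 => 0
  | i + 1 => myG b (bDigit b n i) (myC b n i) (decide (Even i))

theorem stmt15 (b : ℕ) (hb : 2 ≤ b) :
    ∃ F : ℕ → ℕ → Bool → ℤ, ∃ G : ℕ → ℕ → Bool → ℕ,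
      ∀ n : ℕ, ∃ c : ℕ → ℕ, c 0 = 0 ∧ (∀ i, c i ≤ 1) ∧
        (∀ i, c (i + 1) = G (bDigit b n i) (c i) (decide (Even i))) ∧
        (∀ i, 0 ≤ F (bDigit b n i) (c i) (decide (Even i)) ∧
          F (bDigit b n i) (c i) (decide (Even i)) < b) ∧
        (-(n : ℤ)) = ∑ᶠ i : ℕ, F (bDigit b n i) (c i) (decide (Even i)) * (-(b : ℤ)) ^ i := by
  refine ⟨myF b, myG b, fun n => ⟨myC b n, rfl, ?_, fun i => rfl, ?_, ?_⟩⟩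
  case _ =>
    intro i
    induction i with
    | zero => exact Nat.zero_le 1
    | succ i ih =>
      show myG b _ _ _ ≤ 1
      unfold myG; split_ifs <;> omega
  all_goals
    have hd : ∀ i, bDigit b n i < b := by
      intro i; rw [bDigit_eq b hb]; exact Nat.mod_lt _ (by omega)
    have hc1 : ∀ i, myC b n i ≤ 1 := by
      intro i
      induction i with
      | zero => exact Nat.zero_le 1
      | succ i ih => show myG b _ _ _ ≤ 1; unfold myG; split_ifs <;> omega
  case _ =>
    intro i
    have := hd i; have := hc1 i
    unfold myF
    split_ifs with h1 h2 h3 <;> constructor <;> push_cast <;> omega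
  -- main sum identity
  set a : ℕ → ℕ := fun i => bDigit b n i with ha
  set c : ℕ → ℕ := myC b n with hc
  set S : ℕ → ℤ := fun k => ((n / b ^ k : ℕ) : ℤ) with hS
  set R : ℕ → ℤ := fun k => if Even k then -(S k) - c k else S k + c k with hR
  have hSrec : ∀ k, S k = (a k : ℤ) + b * S (k + 1) := by
    intro k
    show ((n / b ^ k : ℕ) : ℤ) = _
    have h1 : bDigit b n k = n / b ^ k % b := bDigit_eq b hb k n
    have h2 : n / b ^ (k + 1) = n / b ^ k / b := by
      rw [Nat.div_div_eq_div_mul, pow_succ]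
    have h4 : n / b ^ k = n / b ^ k % b + b * (n / b ^ k / b) := (Nat.mod_add_div _ _).symm
    simp only [ha, h1, h2, hS]
    exact_mod_cast h4
  have hcrec : ∀ k, c (k + 1) = myG b (a k) (c k) (decide (Even k)) := fun k => rfl
  have hstep : ∀ k, R k = myF b (a k) (c k) (decide (Even k)) + (-(b : ℤ)) * R (k + 1) := by
    intro k
    have hSr := hSrec k
    have hak : a k < b := hd k
    have hck := hc1 k
    rcases Nat.even_or_odd k with hk | hk
    · have hk1 : ¬ Even (k + 1) := by simp [Nat.even_add_one, hk]
      have hG : c (k + 1) = if a k + c k = 0 then 0 else 1 := by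
        rw [hcrec k]; simp [myG, hk]
      have e1 : R k = -(S k) - c k := by simp [hR, hk]
      have e2 : R (k + 1) = S (k + 1) + c (k + 1) := by simp [hR, hk1]
      have hdec : decide (Even k) = true := by simp [hk]
      rw [e1, e2, hdec]
      unfold myF
      rw [if_pos rfl]
      by_cases h0 : a k + c k = 0
      · rw [if_pos h0] at hG ⊢
        have ha0 : a k = 0 := by omega
        have hc0 : c k = 0 := by omega
        rw [hG, ha0, hc0] at *
        push_cast at hSr ⊢
        linarith
      · rw [if_neg h0] at hG ⊢
        rw [hG]
        have hcast : (1 : ℤ) ≤ (a k : ℤ) + (c k : ℤ) := by exact_mod_cast Nat.one_le_iff_ne_zero.mpr h0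
        push_cast
        linarith
    · have hk' : ¬ Even k := Nat.not_even_iff_odd.mpr hk
      have hk1 : Even (k + 1) := by simp [Nat.even_add_one, hk']
      have hG : c (k + 1) = if a k + c k = b then 1 else 0 := by
        rw [hcrec k]; simp [myG, hk']
      have e1 : R k = S k + c k := by simp [hR, hk']
      have e2 : R (k + 1) = -(S (k + 1)) - c (k + 1) := by simp [hR, hk1]
      have hdec : decide (Even k) = false := by simp [hk']
      rw [e1, e2, hdec]
      unfold myF
      rw [if_neg (by simp)]
      by_cases h0 : a k + c k = b
      · rw [if_pos h0] at hG ⊢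
        rw [hG]
        have hcast : (a k : ℤ) + (c k : ℤ) = b := by exact_mod_cast h0
        push_cast
        linarith
      · rw [if_neg h0] at hG ⊢
        rw [hG]
        push_cast
        linarith
  have Hinv : ∀ k, -(n : ℤ) =
      (∑ i ∈ Finset.range k, myF b (a i) (c i) (decide (Even i)) * (-(b : ℤ)) ^ i)
        + (-(b : ℤ)) ^ k * R k := by
    intro k
    induction k with
    | zero =>
      simp [hR, hS, show c 0 = 0 from rfl]
    | succ k ih =>
      rw [Finset.sum_range_succ, ih, hstep k]
      ring
  set K : ℕ := (Nat.digits b n).length + 2 with hK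
  have haz : ∀ i, (Nat.digits b n).length ≤ i → a i = 0 := by
    intro i hi
    exact List.getD_eq_default _ _ hi
  have hpersist : ∀ i, (Nat.digits b n).length ≤ i → c i = 0 → c (i + 1) = 0 := by
    intro i hi h0
    rw [hcrec i, haz i hi, h0]
    unfold myG; split_ifs <;> omega
  have hodd : ∀ i, (Nat.digits b n).length ≤ i → ¬ Even i → c (i + 1) = 0 := by
    intro i hi hie
    rw [hcrec i, haz i hi]
    have := hc1 i
    simp only [myG, decide_eq_true_eq, if_neg hie]
    rw [if_neg (by omega)]
  have hcK : c K = 0 := by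
    rcases Nat.even_or_odd (Nat.digits b n).length with hL | hL
    · exact hodd ((Nat.digits b n).length + 1) (by omega)
        (by simp [Nat.even_add_one, hL])
    · exact hpersist ((Nat.digits b n).length + 1) (by omega)
        (hodd (Nat.digits b n).length le_rfl (Nat.not_even_iff_odd.mpr hL))
  have hctail : ∀ i, K ≤ i → c i = 0 := by
    intro i hi
    obtain ⟨j, rfl⟩ := Nat.exists_eq_add_of_le hi
    induction j with
    | zero => exact hcK
    | succ j ih =>
      exact hpersist (K + j) (by omega) (ih (by omega))
  have hSK : S K = 0 := by
    show ((n / b ^ K : ℕ) : ℤ) = 0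
    have h1 : n < b ^ (Nat.digits b n).length := Nat.lt_base_pow_length_digits (by omega)
    have h2 : b ^ (Nat.digits b n).length ≤ b ^ K := Nat.pow_le_pow_right (by omega) (by omega)
    have : n / b ^ K = 0 := Nat.div_eq_of_lt (by omega)
    simp [this]
  have hfz : ∀ i, K ≤ i → myF b (a i) (c i) (decide (Even i)) * (-(b : ℤ)) ^ i = 0 := by
    intro i hi
    rw [haz i (by omega), hctail i hi]
    have hbne : ¬ (0 + 0 = b) := by omega
    simp [myF, hbne]
  have hsupp : Function.support
      (fun i => myF b (a i) (c i) (decide (Even i)) * (-(b : ℤ)) ^ i) ⊆ Finset.range K := by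
    intro i hi
    simp only [Function.mem_support] at hi
    simp only [Finset.coe_range, Set.mem_Iio]
    by_contra h
    exact hi (hfz i (by omega))
  have hRK : R K = 0 := by
    simp [hR, hSK, hctail K le_rfl]
  rw [finsum_eq_sum_of_support_subset _ hsupp, Hinv K, hRK]
  ring
end
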